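/- Let F(r) = r²/2 - 2√r, r_F = 2·2^{1/3}, and γ(μ) = (1/√2)·∫₀^μ dr/√(F(μ) - F(r)) for μ > r_F. Then lim_{μ→+∞} γ(μ) = π/2. -/

import Mathlib

open Real Set Filter

lemma aux_meas (a : ℝ) : Measurable (fun r : ℝ => 1 / Real.sqrt (a - (r^2/2 - 2*Real.sqrt r))) :=
  measurable_const.div
    ((measurable_const.sub (((measurable_id.pow_const 2).div_const 2).sub
      (measurable_const.mul measurable_id.sqrt))).sqrt)

lemma aux_int (μ : ℝ) (hμ : 0 < μ) :
    IntervalIntegrable (fun r : ℝ => 1 / Real.sqrt (μ^2 - r^2)) MeasureTheory.volume 0 μ := by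
  have h1 : IntervalIntegrable (fun x : ℝ => x ^ (-(1/2) : ℝ)) MeasureTheory.volume 0 μ :=
    intervalIntegral.intervalIntegrable_rpow' (by norm_num)
  have h2 : IntervalIntegrable (fun x : ℝ => (μ - x) ^ (-(1/2) : ℝ))
      MeasureTheory.volume 0 μ := by
    simpa using (h1.comp_sub_left μ).symm
  have h3 := h2.const_mul (Real.sqrt μ)⁻¹
  apply h3.mono_fun
  · exact (measurable_const.div ((measurable_const.sub
      (measurable_id.pow_const 2)).sqrt)).aestronglyMeasurable
  · rw [uIoc_of_le hμ.le]
    filter_upwards [MeasureTheory.ae_restrict_mem measurableSet_Ioc] with x hx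
    have hx0 : 0 < x := hx.1
    have hxμ : x ≤ μ := hx.2
    have hrw : (μ - x) ^ (-(1/2) : ℝ) = (Real.sqrt (μ - x))⁻¹ := by
      rw [Real.rpow_neg (by linarith), Real.sqrt_eq_rpow]
    rw [hrw]
    have hR : (0:ℝ) ≤ (Real.sqrt μ)⁻¹ * (Real.sqrt (μ - x))⁻¹ := by positivity
    rw [Real.norm_eq_abs, Real.norm_eq_abs, abs_of_nonneg (by positivity), abs_of_nonneg hR]
    rcases eq_or_lt_of_le hxμ with rfl | hlt
    · simp
    · have key : Real.sqrt μ * Real.sqrt (μ - x) ≤ Real.sqrt (μ^2 - x^2) := by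
        rw [← Real.sqrt_mul hμ.le]
        apply Real.sqrt_le_sqrt
        nlinarith
      have hpos : 0 < Real.sqrt μ * Real.sqrt (μ - x) :=
        mul_pos (Real.sqrt_pos.2 hμ) (Real.sqrt_pos.2 (by linarith))
      rw [one_div, ← mul_inv]
      exact inv_anti₀ hpos key

lemma aux_val (μ : ℝ) (hμ : 0 < μ) :
    ∫ r in (0:ℝ)..μ, 1 / Real.sqrt (μ^2 - r^2) = π/2 := by
  have hcalc : ∫ r in (0:ℝ)..μ, 1 / Real.sqrt (μ^2 - r^2)
      = Real.arcsin (μ/μ) - Real.arcsin (0/μ) := by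
    refine intervalIntegral.integral_eq_sub_of_hasDeriv_right_of_le
      (f := fun x => Real.arcsin (x/μ)) (f' := fun x => 1 / Real.sqrt (μ^2 - x^2))
      hμ.le ?_ ?_ (aux_int μ hμ)
    · exact (Real.continuous_arcsin.comp (continuous_id.div_const μ)).continuousOn
    · intro x hx
      have hx0 : 0 < x := hx.1
      have hxμ : x < μ := hx.2
      have h1 : x / μ ≠ -1 := by
        have : 0 < x / μ := div_pos hx0 hμ
        linarith
      have h2 : x / μ ≠ 1 := by
        have : x / μ < 1 := (div_lt_one hμ).2 hxμ
        linarith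
      have hD := (Real.hasDerivAt_arcsin h1 h2).comp x ((hasDerivAt_id x).div_const μ)
      have heq : 1 / Real.sqrt (1 - (x/μ)^2) * (1/μ) = 1 / Real.sqrt (μ^2 - x^2) := by
        have e1 : 1 - (x/μ)^2 = (μ^2 - x^2) / μ^2 := by
          field_simp
        rw [e1, Real.sqrt_div (by nlinarith), Real.sqrt_sq hμ.le]
        have hs : 0 < Real.sqrt (μ^2 - x^2) := Real.sqrt_pos.2 (by nlinarith)
        field_simp
      rw [heq] at hD
      exact hD.hasDerivWithinAt
  rw [hcalc, div_self hμ.ne', zero_div, Real.arcsin_one, Real.arcsin_zero, sub_zero]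

set_option maxHeartbeats 1000000 in
lemma aux_main (μ : ℝ) (hμ4 : 4 ≤ μ) :
    π/2 ≤ (1/Real.sqrt 2) *
        ∫ r in (0:ℝ)..μ, 1/Real.sqrt ((μ^2/2 - 2*Real.sqrt μ) - (r^2/2 - 2*Real.sqrt r)) ∧
    (1/Real.sqrt 2) *
        (∫ r in (0:ℝ)..μ, 1/Real.sqrt ((μ^2/2 - 2*Real.sqrt μ) - (r^2/2 - 2*Real.sqrt r)))
      ≤ (1/Real.sqrt 2) * ((Real.sqrt 2 / Real.sqrt (1 - 4/(μ * Real.sqrt μ))) * (π/2)) := by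
  set G : ℝ → ℝ := fun r => r^2/2 - 2*Real.sqrt r with hG
  have sqrt2_pos : (0:ℝ) < Real.sqrt 2 := Real.sqrt_pos.2 (by norm_num)
  have hμ : (0:ℝ) < μ := by linarith
  have hsμ : (2:ℝ) ≤ Real.sqrt μ := by
    rw [show (2:ℝ) = Real.sqrt 4 by
      rw [show (4:ℝ) = 2^2 by norm_num, Real.sqrt_sq]; norm_num]
    exact Real.sqrt_le_sqrt hμ4
  have hsμ0 : 0 < Real.sqrt μ := by linarith
  have hms : (8:ℝ) ≤ μ * Real.sqrt μ := by nlinarith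
  have hms0 : (0:ℝ) < μ * Real.sqrt μ := by linarith
  set c : ℝ := 4 / (μ * Real.sqrt μ) with hc
  have hc0 : 0 < c := by positivity
  have hc12 : c ≤ 1/2 := by
    rw [hc, div_le_iff₀ hms0]; linarith
  have h1c : (0:ℝ) < 1 - c := by linarith
  have fact1 : ∀ r ∈ Icc (0:ℝ) μ, G μ - G r ≤ (μ^2 - r^2)/2 := by
    intro r hr
    have : Real.sqrt r ≤ Real.sqrt μ := Real.sqrt_le_sqrt hr.2
    simp only [hG]; nlinarith
  have fact2 : ∀ r ∈ Icc (0:ℝ) μ, (1 - c) * ((μ^2 - r^2)/2) ≤ G μ - G r := by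
    intro r hr
    have hr0 : 0 ≤ r := hr.1
    have hrμ : r ≤ μ := hr.2
    have hsr : Real.sqrt r ≤ Real.sqrt μ := Real.sqrt_le_sqrt hrμ
    have hsr0 : 0 ≤ Real.sqrt r := Real.sqrt_nonneg r
    have hsq : Real.sqrt μ ^ 2 = μ := Real.sq_sqrt hμ.le
    have hsq' : Real.sqrt r ^ 2 = r := Real.sq_sqrt hr0
    have key : 2 * (Real.sqrt μ - Real.sqrt r) * (μ * Real.sqrt μ) ≤ 4 * ((μ^2 - r^2)/2) := by
      nlinarith [sq_nonneg (Real.sqrt μ - Real.sqrt r), sq_nonneg (Real.sqrt μ + Real.sqrt r),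
        mul_nonneg (sub_nonneg.2 hsr) hsr0,
        mul_nonneg (mul_nonneg (sub_nonneg.2 hsr) hsr0) hsr0,
        mul_nonneg (mul_nonneg (sub_nonneg.2 hsr) hsr0) hsμ0.le]
    have hcd : 2 * (Real.sqrt μ - Real.sqrt r) ≤ c * ((μ^2 - r^2)/2) := by
      rw [hc, div_mul_eq_mul_div, le_div_iff₀ hms0]
      linarith
    simp only [hG]
    nlinarith
  have hub : ∀ r ∈ Icc (0:ℝ) μ,
      1 / Real.sqrt (G μ - G r)
        ≤ (Real.sqrt 2 / Real.sqrt (1 - c)) * (1 / Real.sqrt (μ^2 - r^2)) := by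
    intro r hr
    rcases eq_or_lt_of_le hr.2 with rfl | hlt
    · rw [sub_self, Real.sqrt_zero, div_zero]
      positivity
    · have hr2 : (0:ℝ) < μ^2 - r^2 := by nlinarith [hr.1]
      have hY : 0 < (μ^2 - r^2)/2 := by linarith
      have hA : 0 < (1 - c) * ((μ^2 - r^2)/2) := by positivity
      have h1 : 1 / Real.sqrt (G μ - G r) ≤ 1 / Real.sqrt ((1 - c) * ((μ^2 - r^2)/2)) := by
        apply one_div_le_one_div_of_le (Real.sqrt_pos.2 hA)
        exact Real.sqrt_le_sqrt (fact2 r hr)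
      refine h1.trans (le_of_eq ?_)
      rw [Real.sqrt_mul h1c.le, Real.sqrt_div hr2.le 2]
      have hs1 : 0 < Real.sqrt (1 - c) := Real.sqrt_pos.2 h1c
      have hs2 : 0 < Real.sqrt (μ^2 - r^2) := Real.sqrt_pos.2 hr2
      field_simp
  have hlb : ∀ r ∈ Icc (0:ℝ) μ,
      Real.sqrt 2 * (1 / Real.sqrt (μ^2 - r^2)) ≤ 1 / Real.sqrt (G μ - G r) := by
    intro r hr
    rcases eq_or_lt_of_le hr.2 with rfl | hlt
    · rw [show r^2 - r^2 = (0:ℝ) by ring, Real.sqrt_zero, div_zero, mul_zero]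
      positivity
    · have hr2 : (0:ℝ) < μ^2 - r^2 := by nlinarith [hr.1]
      have hY : 0 < (μ^2 - r^2)/2 := by linarith
      have hA : 0 < G μ - G r := lt_of_lt_of_le (by positivity) (fact2 r hr)
      have h1 : 1 / Real.sqrt ((μ^2 - r^2)/2) ≤ 1 / Real.sqrt (G μ - G r) := by
        apply one_div_le_one_div_of_le (Real.sqrt_pos.2 hA)
        exact Real.sqrt_le_sqrt (fact1 r hr)
      refine le_trans (le_of_eq ?_) h1
      rw [Real.sqrt_div hr2.le 2]
      have hs2 : 0 < Real.sqrt (μ^2 - r^2) := Real.sqrt_pos.2 hr2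
      field_simp
  have hf0 := aux_int μ hμ
  have hUint : IntervalIntegrable
      (fun r : ℝ => (Real.sqrt 2 / Real.sqrt (1 - c)) * (1 / Real.sqrt (μ^2 - r^2)))
      MeasureTheory.volume 0 μ := hf0.const_mul _
  have hLint : IntervalIntegrable
      (fun r : ℝ => Real.sqrt 2 * (1 / Real.sqrt (μ^2 - r^2)))
      MeasureTheory.volume 0 μ := hf0.const_mul _
  have hInt : IntervalIntegrable (fun r : ℝ => 1 / Real.sqrt (G μ - G r))
      MeasureTheory.volume 0 μ := by
    apply hUint.mono_fun
    · exact (aux_meas (G μ)).aestronglyMeasurable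
    · rw [uIoc_of_le hμ.le]
      filter_upwards [MeasureTheory.ae_restrict_mem measurableSet_Ioc] with x hx
      have hx' : x ∈ Icc (0:ℝ) μ := ⟨hx.1.le, hx.2⟩
      have hnn : (0:ℝ) ≤ 1 / Real.sqrt (G μ - G x) := by positivity
      have hnn2 : (0:ℝ) ≤ (Real.sqrt 2 / Real.sqrt (1 - c)) * (1 / Real.sqrt (μ^2 - x^2)) := by
        positivity
      rw [Real.norm_eq_abs, Real.norm_eq_abs, abs_of_nonneg hnn, abs_of_nonneg hnn2]
      exact hub x hx'
  have hIU : (∫ r in (0:ℝ)..μ, 1 / Real.sqrt (G μ - G r))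
      ≤ ∫ r in (0:ℝ)..μ, (Real.sqrt 2 / Real.sqrt (1 - c)) * (1 / Real.sqrt (μ^2 - r^2)) :=
    intervalIntegral.integral_mono_on hμ.le hInt hUint hub
  have hIL : (∫ r in (0:ℝ)..μ, Real.sqrt 2 * (1 / Real.sqrt (μ^2 - r^2)))
      ≤ ∫ r in (0:ℝ)..μ, 1 / Real.sqrt (G μ - G r) :=
    intervalIntegral.integral_mono_on hμ.le hLint hInt hlb
  rw [intervalIntegral.integral_const_mul, aux_val μ hμ] at hIU hIL
  constructor
  · calc π/2 = (1/Real.sqrt 2) * (Real.sqrt 2 * (π/2)) := by field_simp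
    _ ≤ _ := mul_le_mul_of_nonneg_left hIL (by positivity)
  · exact mul_le_mul_of_nonneg_left hIU (by positivity)

theorem stmt_10 :
    let F : ℝ → ℝ := fun r => r^2/2 - 2*Real.sqrt r
    let γ : ℝ → ℝ := fun μ => (1/Real.sqrt 2) * ∫ r in (0:ℝ)..μ, 1/Real.sqrt (F μ - F r)
    Tendsto γ atTop (nhds (π/2)) := by
  intro F γ
  have sqrt2_pos : (0:ℝ) < Real.sqrt 2 := Real.sqrt_pos.2 (by norm_num)
  apply tendsto_of_tendsto_of_tendsto_of_le_of_le' (g := fun _ : ℝ => π/2)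
    (h := fun μ : ℝ =>
      (1/Real.sqrt 2) * ((Real.sqrt 2 / Real.sqrt (1 - 4/(μ * Real.sqrt μ))) * (π/2)))
  · exact tendsto_const_nhds
  · have t0 : Tendsto (fun μ : ℝ => 4 / (μ * Real.sqrt μ)) atTop (nhds 0) := by
      apply Tendsto.div_atTop tendsto_const_nhds
      apply tendsto_atTop_mono' atTop _ tendsto_id
      filter_upwards [eventually_ge_atTop (1:ℝ)] with μ hμ
      have h1 : (1:ℝ) ≤ Real.sqrt μ := by
        rw [show (1:ℝ) = Real.sqrt 1 by simp]
        exact Real.sqrt_le_sqrt hμ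
      have h2 : μ * 1 ≤ μ * Real.sqrt μ :=
        mul_le_mul_of_nonneg_left h1 (by linarith)
      simpa using h2
    have tc : ContinuousAt
        (fun x : ℝ => (1/Real.sqrt 2) * ((Real.sqrt 2 / Real.sqrt (1 - x)) * (π/2))) 0 := by
      apply ContinuousAt.mul continuousAt_const
      apply ContinuousAt.mul _ continuousAt_const
      apply ContinuousAt.div continuousAt_const
      · exact (Real.continuous_sqrt.comp (continuous_const.sub continuous_id)).continuousAt
      · simp
    have := tc.tendsto.comp t0
    simp only [Function.comp_def] at this
    convert this using 2
    rw [sub_zero, Real.sqrt_one, div_one]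
    field_simp
  · filter_upwards [eventually_ge_atTop (4:ℝ)] with μ hμ4
    exact (aux_main μ hμ4).1
  · filter_upwards [eventually_ge_atTop (4:ℝ)] with μ hμ4
    exact (aux_main μ hμ4).2
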